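/- Let ψ : ℝ → ℝ be twice continuously differentiable with ψ''(s) + ψ'(s) = sin(2ψ(s)) for all s ∈ ℝ, and suppose ψ(s) → 0 and ψ'(s) → 0 as s → +∞. Then for every s ∈ ℝ the function ρ ↦ ψ'(ρ)² is integrable on [s,∞) and ∫_{s}^{∞} ψ'(ρ)² dρ = (1/2)·ψ'(s)² − sin²(ψ(s)). -/

import Mathlib

open Set MeasureTheory Filter

/-- Energy identity for the damped pendulum equation ψ'' + ψ' = sin(2ψ). -/
theorem pendulum_energy_identity (ψ : ℝ → ℝ) (hψ : ContDiff ℝ 2 ψ)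
    (heq : ∀ s : ℝ, deriv (deriv ψ) s + deriv ψ s = Real.sin (2 * ψ s))
    (hlim : Tendsto ψ atTop (nhds 0))
    (hlim' : Tendsto (deriv ψ) atTop (nhds 0)) :
    ∀ s : ℝ,
      IntegrableOn (fun ρ => (deriv ψ ρ) ^ 2) (Ici s) ∧
      ∫ ρ in Ici s, (deriv ψ ρ) ^ 2 =
        (1 / 2) * (deriv ψ s) ^ 2 - (Real.sin (ψ s)) ^ 2 := by
  intro s
  set g : ℝ → ℝ := fun x => -((1/2) * (deriv ψ x) ^ 2 + (1/2) * Real.cos (2 * ψ x))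
    with hg_def
  have hψ1 : Differentiable ℝ ψ := hψ.differentiable two_ne_zero
  have hψ' : Differentiable ℝ (deriv ψ) := by
    have := (hψ.iterate_deriv' 1 1).differentiable (by norm_num)
    simpa using this
  have hderiv : ∀ x : ℝ, HasDerivAt g ((deriv ψ x) ^ 2) x := by
    intro x
    have h1 : HasDerivAt (deriv ψ) (deriv (deriv ψ) x) x := (hψ'.differentiableAt).hasDerivAt
    have h2 : HasDerivAt ψ (deriv ψ x) x := (hψ1.differentiableAt).hasDerivAt
    have h3 : HasDerivAt (fun y => (deriv ψ y) ^ 2)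
        (2 * deriv ψ x * deriv (deriv ψ) x) x := by
      exact ((hasDerivAt_pow 2 (deriv ψ x)).comp x h1).congr_deriv (by norm_num)
    have h4 : HasDerivAt (fun y => Real.cos (2 * ψ y))
        (-Real.sin (2 * ψ x) * (2 * deriv ψ x)) x := by
      exact (Real.hasDerivAt_cos (2 * ψ x)).comp x ((h2.const_mul 2))
    have h5 : HasDerivAt g
        (-((1/2) * (2 * deriv ψ x * deriv (deriv ψ) x)
          + (1/2) * (-Real.sin (2 * ψ x) * (2 * deriv ψ x)))) x :=
      ((h3.const_mul (1/2)).add (h4.const_mul (1/2))).neg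
    convert h5 using 1
    have h := heq x
    linear_combination (deriv ψ x) * h
  have hnn : ∀ x : ℝ, 0 ≤ (deriv ψ x) ^ 2 := fun x => sq_nonneg _
  have hlimg : Tendsto g atTop (nhds (-(1/2 : ℝ))) := by
    have hc : Tendsto (fun x => Real.cos (2 * ψ x)) atTop (nhds 1) := by
      have : Tendsto (fun x => 2 * ψ x) atTop (nhds 0) := by
        simpa using hlim.const_mul (2 : ℝ)
      simpa [Function.comp_def] using (Real.continuous_cos.tendsto 0).comp this
    have hsq : Tendsto (fun x => (deriv ψ x) ^ 2) atTop (nhds 0) := by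
      simpa using hlim'.pow 2
    have h := ((hsq.const_mul (1/2 : ℝ)).add (hc.const_mul (1/2 : ℝ))).neg
    have h2 : Tendsto g atTop (nhds (-((1/2:ℝ) * 0 + (1/2:ℝ) * 1))) := h
    norm_num at h2
    exact h2
  have hcont : ContinuousWithinAt g (Ici s) s := (hderiv s).continuousAt.continuousWithinAt
  have hint : IntegrableOn (fun ρ => (deriv ψ ρ) ^ 2) (Ioi s) :=
    integrableOn_Ioi_deriv_of_nonneg hcont (fun x _ => hderiv x) (fun x _ => hnn x) hlimg
  have hval : ∫ ρ in Ioi s, (deriv ψ ρ) ^ 2 = -(1/2 : ℝ) - g s :=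
    integral_Ioi_of_hasDerivAt_of_nonneg hcont (fun x _ => hderiv x) (fun x _ => hnn x) hlimg
  constructor
  · rw [integrableOn_Ici_iff_integrableOn_Ioi]
    exact hint
  · rw [integral_Ici_eq_integral_Ioi, hval, hg_def]
    have h := Real.cos_two_mul (ψ s)
    have h2 := Real.sin_sq_add_cos_sq (ψ s)
    simp only []
    nlinarith
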